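/- Let ℓ : ℝ³ → (0,∞) be twice continuously differentiable and let L₊ = sup_p sup_{|q|=1} (q·∇)² ℓ(p) be finite. Define ω(p) = (e^{ℓ(p)} − 1)^{−1} and, for q ∈ ℝ³, h_q(p) = ln( (2 + ω(p+q) + ω(p−q)) / (ω(p+q) + ω(p−q)) ). Then for all p, q ∈ ℝ³: h_q(p) − h₀(p) ≤ L₊ |q|². (Note h₀(p) = ℓ(p).) -/

import Mathlib

/-- The Bose occupation number ω(x) = (e^x − 1)⁻¹. -/
noncomputable def boseOcc (x : ℝ) : ℝ := (Real.exp x - 1)⁻¹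

/-- h_q(p) = ln((2 + ω(ℓ(p+q)) + ω(ℓ(p−q)))/(ω(ℓ(p+q)) + ω(ℓ(p−q)))); note h₀ = ℓ. -/
noncomputable def hSym (ℓ : EuclideanSpace ℝ (Fin 3) → ℝ)
    (q p : EuclideanSpace ℝ (Fin 3)) : ℝ :=
  Real.log ((2 + boseOcc (ℓ (p + q)) + boseOcc (ℓ (p - q))) /
    (boseOcc (ℓ (p + q)) + boseOcc (ℓ (p - q))))

lemma hcore (a b : ℝ) (ha : 0 < a) (hb : 0 < b) :
    Real.log ((2 + boseOcc a + boseOcc b) / (boseOcc a + boseOcc b)) ≤ (a + b) / 2 := by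
  set α := Real.exp a with hαdef
  set β := Real.exp b with hβdef
  set s := Real.exp ((a + b) / 2) with hsdef
  have h1 : 1 < α := Real.one_lt_exp_iff.mpr ha
  have h2 : 1 < β := Real.one_lt_exp_iff.mpr hb
  have hs1 : 1 < s := Real.one_lt_exp_iff.mpr (by linarith)
  have hs2 : s * s = α * β := by
    rw [hsdef, hαdef, hβdef, ← Real.exp_add, ← Real.exp_add]; ring_nf
  have hAM : 2 * s ≤ α + β := by nlinarith [sq_nonneg (α - β), sq_nonneg (α + β - 2 * s)]
  have key : 2 * ((α - 1) * (β - 1)) ≤ (s - 1) * (α + β - 2) := by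
    nlinarith [mul_nonneg (by linarith : (0:ℝ) ≤ s + 1) (by linarith : (0:ℝ) ≤ α + β - 2 * s), hs2]
  have hA : 0 < α - 1 := by linarith
  have hB : 0 < β - 1 := by linarith
  have hωa : boseOcc a = (α - 1)⁻¹ := rfl
  have hωb : boseOcc b = (β - 1)⁻¹ := rfl
  have hW : boseOcc a + boseOcc b = (α + β - 2) / ((α - 1) * (β - 1)) := by
    rw [hωa, hωb]; field_simp; ring
  have hWpos : 0 < boseOcc a + boseOcc b := by
    rw [hW]; exact div_pos (by linarith) (by positivity)
  have hX : (2 + boseOcc a + boseOcc b) / (boseOcc a + boseOcc b) ≤ s := by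
    rw [div_le_iff₀ hWpos]
    have h2' : 2 ≤ (s - 1) * (boseOcc a + boseOcc b) := by
      rw [hW, ← mul_div_assoc, le_div_iff₀ (by positivity)]
      linarith [key]
    nlinarith [h2', hWpos]
  have hXpos : 0 < (2 + boseOcc a + boseOcc b) / (boseOcc a + boseOcc b) :=
    div_pos (by linarith) hWpos
  calc Real.log ((2 + boseOcc a + boseOcc b) / (boseOcc a + boseOcc b))
      ≤ Real.log s := Real.log_le_log hXpos hX
    _ = (a + b) / 2 := Real.log_exp _

lemma h0_eq (ℓ : EuclideanSpace ℝ (Fin 3) → ℝ) (hpos : ∀ p, 0 < ℓ p)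
    (p : EuclideanSpace ℝ (Fin 3)) : hSym ℓ 0 p = ℓ p := by
  have hE : 1 < Real.exp (ℓ p) := Real.one_lt_exp_iff.mpr (hpos p)
  have hne : Real.exp (ℓ p) - 1 ≠ 0 := by linarith
  unfold hSym boseOcc
  rw [add_zero, sub_zero]
  have : (2 + (Real.exp (ℓ p) - 1)⁻¹ + (Real.exp (ℓ p) - 1)⁻¹) /
      ((Real.exp (ℓ p) - 1)⁻¹ + (Real.exp (ℓ p) - 1)⁻¹) = Real.exp (ℓ p) := by
    field_simp
    ring
  rw [this, Real.log_exp]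

lemma taylor_key {ℓ : EuclideanSpace ℝ (Fin 3) → ℝ} (hC2 : ContDiff ℝ 2 ℓ)
    (p v : EuclideanSpace ℝ (Fin 3)) (C : ℝ)
    (hH : ∀ x, fderiv ℝ (fderiv ℝ ℓ) x v v ≤ C) :
    ℓ (p + v) + ℓ (p - v) - 2 * ℓ p ≤ C := by
  have hdiff : Differentiable ℝ ℓ := hC2.differentiable two_ne_zero
  have hF : Differentiable ℝ (fderiv ℝ ℓ) :=
    (hC2.fderiv_right (m := 1) one_add_one_eq_two.le).differentiable one_ne_zero
  have hc : ∀ t : ℝ, HasDerivAt (fun s : ℝ => p + s • v) v t := by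
    intro t
    simpa using ((hasDerivAt_id t).smul_const v).const_add p
  have hg1 : ∀ t : ℝ, HasDerivAt (fun t : ℝ => ℓ (p + t • v))
      (fderiv ℝ ℓ (p + t • v) v) t := by
    intro t
    exact ((hdiff (p + t • v)).hasFDerivAt).comp_hasDerivAt t (hc t)
  have hg2 : ∀ t : ℝ, HasDerivAt (fun t : ℝ => fderiv ℝ ℓ (p + t • v) v)
      (fderiv ℝ (fderiv ℝ ℓ) (p + t • v) v v) t := by
    intro t
    have h1 : HasFDerivAt (fun x => fderiv ℝ ℓ x v)
        ((fderiv ℝ (fderiv ℝ ℓ) (p + t • v)).flip v) (p + t • v) := by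
      have := ((hF (p + t • v)).hasFDerivAt).clm_apply (hasFDerivAt_const v (p + t • v))
      simpa using this
    have := h1.comp_hasDerivAt t (hc t)
    exact this
  set φ : ℝ → ℝ := fun t => C * t ^ 2 / 2 - ℓ (p + t • v) with hφdef
  have hφ1 : ∀ t : ℝ, HasDerivAt φ (C * t - fderiv ℝ ℓ (p + t • v) v) t := by
    intro t
    have hq : HasDerivAt (fun t : ℝ => C * t ^ 2 / 2) (C * t) t := by
      have := ((hasDerivAt_pow 2 t).const_mul C).div_const 2
      refine this.congr_deriv ?_
      push_cast; ring
    exact hq.sub (hg1 t)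
  have hderiv : deriv φ = fun t => C * t - fderiv ℝ ℓ (p + t • v) v :=
    funext fun t => (hφ1 t).deriv
  have hφ2 : ∀ t : ℝ, HasDerivAt (fun t : ℝ => C * t - fderiv ℝ ℓ (p + t • v) v)
      (C - fderiv ℝ (fderiv ℝ ℓ) (p + t • v) v v) t := by
    intro t
    have hid : HasDerivAt (fun t : ℝ => C * t) C t := by
      simpa using (hasDerivAt_id t).const_mul C
    exact hid.sub (hg2 t)
  have hconv : ConvexOn ℝ Set.univ φ := by
    apply convexOn_univ_of_deriv2_nonneg
    · exact fun t => (hφ1 t).differentiableAt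
    · rw [hderiv]; exact fun t => (hφ2 t).differentiableAt
    · intro x
      have : deriv^[2] φ x = deriv (deriv φ) x := by
        simp [Function.iterate_succ, Function.comp]
      rw [this, hderiv, (hφ2 x).deriv]
      linarith [hH (p + x • v)]
  have h := hconv.2 (Set.mem_univ (1:ℝ)) (Set.mem_univ (-1:ℝ))
    (by norm_num : (0:ℝ) ≤ 1/2) (by norm_num : (0:ℝ) ≤ 1/2) (by norm_num)
  have e0 : (1/2 : ℝ) • (1:ℝ) + (1/2 : ℝ) • (-1:ℝ) = 0 := by norm_num
  rw [e0] at h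
  have e1 : p + (1:ℝ) • v = p + v := by simp
  have e2 : p + (-1:ℝ) • v = p - v := by simp [sub_eq_add_neg]
  have e3 : p + (0:ℝ) • v = p := by simp
  simp only [hφdef, e1, e2, e3, smul_eq_mul] at h
  nlinarith [h]

/-- Upper bound h_q(p) − h₀(p) ≤ L₊|q|², where L₊ bounds the Hessian of ℓ from above. -/
theorem stmt_9 (ℓ : EuclideanSpace ℝ (Fin 3) → ℝ) (hpos : ∀ p, 0 < ℓ p)
    (hC2 : ContDiff ℝ 2 ℓ) (Lplus : ℝ)
    (hL : ∀ p q : EuclideanSpace ℝ (Fin 3), ‖q‖ = 1 →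
      fderiv ℝ (fderiv ℝ ℓ) p q q ≤ Lplus)
    (p q : EuclideanSpace ℝ (Fin 3)) :
    hSym ℓ q p - hSym ℓ 0 p ≤ Lplus * ‖q‖ ^ 2 := by
  have hL0 : 0 ≤ Lplus := by
    by_contra hneg
    push_neg at hneg
    set u : EuclideanSpace ℝ (Fin 3) := EuclideanSpace.single 0 1 with hudef
    have hu : ‖u‖ = 1 := by
      rw [hudef, EuclideanSpace.norm_single]; norm_num
    set T := Real.sqrt (2 * ℓ p / (-Lplus)) with hTdef
    have hT2 : T ^ 2 = 2 * ℓ p / (-Lplus) := by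
      rw [hTdef, Real.sq_sqrt]
      apply div_nonneg
      · linarith [hpos p]
      · linarith
    have hHb : ∀ x, fderiv ℝ (fderiv ℝ ℓ) x (T • u) (T • u) ≤ Lplus * T ^ 2 := by
      intro x
      have hb := hL x u hu
      have : fderiv ℝ (fderiv ℝ ℓ) x (T • u) (T • u)
          = T ^ 2 * fderiv ℝ (fderiv ℝ ℓ) x u u := by
        simp [map_smul]; ring
      rw [this]
      have hT2n : 0 ≤ T ^ 2 := sq_nonneg T
      nlinarith [hb, hT2n]
    have hkey := taylor_key hC2 p (T • u) (Lplus * T ^ 2) hHb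
    have hval : Lplus * T ^ 2 = -(2 * ℓ p) := by
      have hne : Lplus ≠ 0 := ne_of_lt hneg
      rw [hT2]
      field_simp [hne]
    rw [hval] at hkey
    linarith [hpos (p + T • u), hpos (p - T • u), hpos p]
  rcases eq_or_ne q 0 with hq | hq
  · simp [hq]
  · have hu : ‖(‖q‖⁻¹ : ℝ) • q‖ = 1 := norm_smul_inv_norm hq
    have hHb : ∀ x, fderiv ℝ (fderiv ℝ ℓ) x q q ≤ Lplus * ‖q‖ ^ 2 := by
      intro x
      have hb := hL x ((‖q‖⁻¹ : ℝ) • q) hu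
      have hqe : q = ‖q‖ • ((‖q‖⁻¹ : ℝ) • q) := by
        rw [smul_smul, mul_inv_cancel₀ (norm_ne_zero_iff.mpr hq), one_smul]
      have hval : fderiv ℝ (fderiv ℝ ℓ) x ((‖q‖⁻¹ : ℝ) • q) ((‖q‖⁻¹ : ℝ) • q)
          = ‖q‖⁻¹ ^ 2 * fderiv ℝ (fderiv ℝ ℓ) x q q := by
        simp [map_smul]; ring
      rw [hval] at hb
      have hq2 : (0:ℝ) < ‖q‖ := norm_pos_iff.mpr hq
      have hmul : ‖q‖ ^ 2 * (‖q‖⁻¹ ^ 2 * fderiv ℝ (fderiv ℝ ℓ) x q q)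
          = fderiv ℝ (fderiv ℝ ℓ) x q q := by
        field_simp
      calc fderiv ℝ (fderiv ℝ ℓ) x q q
          = ‖q‖ ^ 2 * (‖q‖⁻¹ ^ 2 * fderiv ℝ (fderiv ℝ ℓ) x q q) := hmul.symm
        _ ≤ ‖q‖ ^ 2 * Lplus := mul_le_mul_of_nonneg_left hb (sq_nonneg _)
        _ = Lplus * ‖q‖ ^ 2 := mul_comm _ _
    have hkey := taylor_key hC2 p q (Lplus * ‖q‖ ^ 2) hHb
    have hcore' := hcore (ℓ (p + q)) (ℓ (p - q)) (hpos _) (hpos _)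
    have h0 := h0_eq ℓ hpos p
    have hsym : hSym ℓ q p ≤ (ℓ (p + q) + ℓ (p - q)) / 2 := hcore'
    have hnn : 0 ≤ Lplus * ‖q‖ ^ 2 := by positivity
    linarith
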